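/- For ℓ₁, ℓ₂ > 0 and γ > 0, the improper integral I₂ = ∫_{x₁²+x₂² > γ²} dx₁dx₂ / (16π⁴ ℓ₁ℓ₂ ‖(x₁/ℓ₁, x₂/ℓ₂)‖⁴_{ℝ²}) over the exterior of the disk of radius γ equals (ℓ₁² + ℓ₂²)/(32 γ² π³). -/

import Mathlib

open Real MeasureTheory


lemma denom_pos (ℓ₁ ℓ₂ : ℝ) (h1 : 0 < ℓ₁) (h2 : 0 < ℓ₂) (θ : ℝ) :
    0 < ℓ₂ * cos θ ^ 2 + ℓ₁ * sin θ ^ 2 := by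
  rcases le_total ℓ₁ ℓ₂ with h | h <;>
    nlinarith [sin_sq_add_cos_sq θ, sq_nonneg (sin θ), sq_nonneg (cos θ)]

lemma hasDeriv_F (ℓ₁ ℓ₂ : ℝ) (h1 : 0 < ℓ₁) (h2 : 0 < ℓ₂) (θ : ℝ) :
    HasDerivAt (fun θ : ℝ =>
      (ℓ₁*ℓ₂*(ℓ₁^2+ℓ₂^2)/2) * (θ - arctan ((ℓ₂-ℓ₁) * (sin θ * cos θ) / (ℓ₂ * cos θ^2 + ℓ₁ * sin θ^2)))
      + ((ℓ₁^2-ℓ₂^2)*ℓ₁^2*ℓ₂^2/2) * (sin θ * cos θ) / (ℓ₂^2 * cos θ^2 + ℓ₁^2 * sin θ^2))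
      (((cos θ^2/ℓ₁^2 + sin θ^2/ℓ₂^2)^2)⁻¹) θ := by
  have hD1 : 0 < ℓ₂ * cos θ ^ 2 + ℓ₁ * sin θ ^ 2 := denom_pos ℓ₁ ℓ₂ h1 h2 θ
  have hD2 : 0 < ℓ₂^2 * cos θ ^ 2 + ℓ₁^2 * sin θ ^ 2 :=
    denom_pos (ℓ₁^2) (ℓ₂^2) (by positivity) (by positivity) θ
  have hsc := sin_sq_add_cos_sq θ
  -- derivative of numerator N θ = (ℓ₂-ℓ₁) * (sin θ * cos θ)
  have hN : HasDerivAt (fun θ : ℝ => (ℓ₂-ℓ₁) * (sin θ * cos θ))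
      ((ℓ₂-ℓ₁) * (cos θ^2 - sin θ^2)) θ := by
    have := ((hasDerivAt_sin θ).mul (hasDerivAt_cos θ)).const_mul (ℓ₂-ℓ₁)
    refine this.congr_deriv ?_; ring
  have hDen1 : HasDerivAt (fun θ : ℝ => ℓ₂ * cos θ^2 + ℓ₁ * sin θ^2)
      (2*(ℓ₁-ℓ₂) * (sin θ * cos θ)) θ := by
    have := (((hasDerivAt_cos θ).pow 2).const_mul ℓ₂).add (((hasDerivAt_sin θ).pow 2).const_mul ℓ₁)
    refine this.congr_deriv ?_; ring
  have hu : HasDerivAt (fun θ : ℝ => (ℓ₂-ℓ₁) * (sin θ * cos θ) / (ℓ₂ * cos θ^2 + ℓ₁ * sin θ^2))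
      (((ℓ₂-ℓ₁) * (cos θ^2 - sin θ^2) * (ℓ₂ * cos θ^2 + ℓ₁ * sin θ^2)
        - (ℓ₂-ℓ₁) * (sin θ * cos θ) * (2*(ℓ₁-ℓ₂) * (sin θ * cos θ)))
        / (ℓ₂ * cos θ^2 + ℓ₁ * sin θ^2)^2) θ := hN.div hDen1 hD1.ne'
  have harc := (hasDerivAt_arctan _).comp θ hu
  have hM : HasDerivAt (fun θ : ℝ => (ℓ₁^2-ℓ₂^2)*ℓ₁^2*ℓ₂^2/2 * (sin θ * cos θ))
      ((ℓ₁^2-ℓ₂^2)*ℓ₁^2*ℓ₂^2/2 * (cos θ^2 - sin θ^2)) θ := by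
    have := ((hasDerivAt_sin θ).mul (hasDerivAt_cos θ)).const_mul ((ℓ₁^2-ℓ₂^2)*ℓ₁^2*ℓ₂^2/2)
    refine this.congr_deriv ?_; ring
  have hDen2 : HasDerivAt (fun θ : ℝ => ℓ₂^2 * cos θ^2 + ℓ₁^2 * sin θ^2)
      (2*(ℓ₁^2-ℓ₂^2) * (sin θ * cos θ)) θ := by
    have := (((hasDerivAt_cos θ).pow 2).const_mul (ℓ₂^2)).add
      (((hasDerivAt_sin θ).pow 2).const_mul (ℓ₁^2))
    refine this.congr_deriv ?_; ring
  have hw := hM.div hDen2 hD2.ne'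
  have htot := ((hasDerivAt_id θ).sub harc).const_mul (ℓ₁*ℓ₂*(ℓ₁^2+ℓ₂^2)/2) |>.add hw
  refine htot.congr_deriv (Eq.symm ?_)
  set s := sin θ with hs
  set c := cos θ with hc
  clear_value s c
  have h1' := h1.ne'
  have h2' := h2.ne'
  have hq : 0 < 1 + ((ℓ₂-ℓ₁) * (s * c) / (ℓ₂ * c^2 + ℓ₁ * s^2))^2 := by positivity
  have hD2' : (0:ℝ) < c ^ 2 * ℓ₂ ^ 2 + s ^ 2 * ℓ₁ ^ 2 := by nlinarith
  have hq' : 1 + ((ℓ₂-ℓ₁) * (s * c) / (ℓ₂ * c^2 + ℓ₁ * s^2))^2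
      = (ℓ₂^2 * c^2 + ℓ₁^2 * s^2) / (ℓ₂ * c^2 + ℓ₁ * s^2)^2 := by
    field_simp
    linear_combination (ℓ₂^2*c^2+ℓ₁^2*s^2) * hsc
  rw [hq']
  have hA : c^2*ℓ₂+ℓ₁*s^2 ≠ 0 := by nlinarith
  have hB : c^2*ℓ₂^2+ℓ₁^2*s^2 ≠ 0 := by nlinarith
  field_simp [hA, hB]
  linear_combination ((1)*ℓ₁^2*ℓ₂^4*c^4 + (-1)*ℓ₁^3*ℓ₂^3*c^4 + (-2)*ℓ₁^3*ℓ₂^3*s^2*c^2 + (2)*ℓ₁^4*ℓ₂^2*s^2*c^2 + (1)*ℓ₂^6*c^4 + (-1)*ℓ₁*ℓ₂^5*c^4 + (-1)*ℓ₁*ℓ₂^5*s^2*c^2 + (2)*ℓ₁^2*ℓ₂^4*s^2*c^2 + (-1)*ℓ₁^5*ℓ₂*s^2*c^2 + (-1)*ℓ₁^5*ℓ₂*s^4 + (1)*ℓ₁^6*s^4 + (-1)*ℓ₁^3*ℓ₂^3*s^4 + (1)*ℓ₁^4*ℓ₂^2*s^4 + (-2)*ℓ₁^3*ℓ₂^3*c^2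 + (-2)*ℓ₁^3*ℓ₂^3*s^2 + (-2)*ℓ₁^3*ℓ₂^3) * hsc

lemma Dpos (ℓ₁ ℓ₂ : ℝ) (h1 : 0 < ℓ₁) (h2 : 0 < ℓ₂) (θ : ℝ) :
    0 < cos θ ^ 2 / ℓ₁ ^ 2 + sin θ ^ 2 / ℓ₂ ^ 2 := by
  have := denom_pos (ℓ₁^2) (ℓ₂^2) (by positivity) (by positivity) θ
  have e : cos θ ^ 2 / ℓ₁ ^ 2 + sin θ ^ 2 / ℓ₂ ^ 2
      = (ℓ₂^2 * cos θ ^ 2 + ℓ₁^2 * sin θ ^ 2) / (ℓ₁^2 * ℓ₂^2) := by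
    field_simp
  rw [e]; positivity

lemma angular (ℓ₁ ℓ₂ : ℝ) (h1 : 0 < ℓ₁) (h2 : 0 < ℓ₂) :
    ∫ θ in Set.Ioo (-π) π, ((cos θ^2/ℓ₁^2 + sin θ^2/ℓ₂^2)^2)⁻¹
      = π * (ℓ₁*ℓ₂*(ℓ₁^2+ℓ₂^2)) := by
  have hcont : Continuous fun θ : ℝ => ((cos θ^2/ℓ₁^2 + sin θ^2/ℓ₂^2)^2)⁻¹ := by
    apply Continuous.inv₀ (by fun_prop)
    intro θ
    exact pow_ne_zero 2 (Dpos ℓ₁ ℓ₂ h1 h2 θ).ne'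
  rw [← MeasureTheory.integral_Ioc_eq_integral_Ioo,
    ← intervalIntegral.integral_of_le (by linarith [pi_pos] : -π ≤ π)]
  rw [intervalIntegral.integral_eq_sub_of_hasDerivAt
    (fun θ _ => hasDeriv_F ℓ₁ ℓ₂ h1 h2 θ) (hcont.intervalIntegrable _ _)]
  simp [Real.sin_pi, Real.cos_pi]
  ring

lemma radial (γ : ℝ) (hγ : 0 < γ) :
    ∫ r in Set.Ioi γ, ((r:ℝ)^3)⁻¹ = (γ^2)⁻¹ / 2 := by
  have h : ∀ r ∈ Set.Ioi γ, ((r:ℝ)^3)⁻¹ = r ^ (-3 : ℝ) := by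
    intro r hr
    have hr0 : 0 < r := hγ.trans hr
    rw [rpow_neg hr0.le, ← rpow_natCast r 3]
    norm_num
  rw [setIntegral_congr_fun measurableSet_Ioi h,
    integral_Ioi_rpow_of_lt (by norm_num) hγ]
  rw [show (-3 : ℝ) + 1 = -2 by norm_num, rpow_neg hγ.le, ← rpow_natCast γ 2]
  norm_num

/-- Exact value of the exterior integral `I₂`. -/
theorem stmt6 (ℓ₁ ℓ₂ γ : ℝ) (h1 : 0 < ℓ₁) (h2 : 0 < ℓ₂) (hγ : 0 < γ) :
    (∫ x in {p : ℝ × ℝ | p.1^2 + p.2^2 > γ^2},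
        (16*π^4*ℓ₁*ℓ₂*((x.1/ℓ₁)^2 + (x.2/ℓ₂)^2)^2)⁻¹)
      = (ℓ₁^2 + ℓ₂^2) / (32*γ^2*π^3) := by
  have hπ := pi_pos
  have hS : MeasurableSet {p : ℝ × ℝ | p.1^2 + p.2^2 > γ^2} := by
    apply measurableSet_lt measurable_const
    fun_prop
  rw [← integral_indicator hS, ← integral_comp_polarCoord_symm]
  have htarget : polarCoord.target = Set.Ioi (0:ℝ) ×ˢ Set.Ioo (-π) π := rfl
  rw [htarget]
  have hDpos : ∀ θ : ℝ, 0 < cos θ^2/ℓ₁^2 + sin θ^2/ℓ₂^2 := by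
    intro θ
    have e : cos θ ^ 2 / ℓ₁ ^ 2 + sin θ ^ 2 / ℓ₂ ^ 2
        = (ℓ₂^2 * cos θ ^ 2 + ℓ₁^2 * sin θ ^ 2) / (ℓ₁^2 * ℓ₂^2) := by
      field_simp
    rw [e]
    have : 0 < ℓ₂^2 * cos θ ^ 2 + ℓ₁^2 * sin θ ^ 2 := by
      rcases le_total (ℓ₁^2) (ℓ₂^2) with hle | hle <;>
        nlinarith [sin_sq_add_cos_sq θ, sq_nonneg (sin θ), sq_nonneg (cos θ)]
    positivity
  have hcongr : ∀ p ∈ Set.Ioi (0:ℝ) ×ˢ Set.Ioo (-π) π,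
      p.1 • Set.indicator {p : ℝ × ℝ | p.1^2 + p.2^2 > γ^2}
          (fun x => (16*π^4*ℓ₁*ℓ₂*((x.1/ℓ₁)^2 + (x.2/ℓ₂)^2)^2)⁻¹) (polarCoord.symm p)
        = (Set.Ioi γ ×ˢ (Set.univ : Set ℝ)).indicator
            (fun p : ℝ × ℝ => ((p.1^3)⁻¹) * ((16*π^4*ℓ₁*ℓ₂)⁻¹
              * ((cos p.2^2/ℓ₁^2 + sin p.2^2/ℓ₂^2)^2)⁻¹)) p := by
    rintro ⟨r, θ⟩ ⟨hr, hθ⟩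
    simp only [Set.mem_Ioi] at hr
    have hmem : polarCoord.symm (r, θ) ∈ {p : ℝ × ℝ | p.1^2 + p.2^2 > γ^2} ↔ γ < r := by
      rw [polarCoord_symm_apply]
      simp only [Set.mem_setOf_eq]
      constructor
      · intro h
        have : γ^2 < r^2 := by nlinarith [sin_sq_add_cos_sq θ]
        exact (pow_lt_pow_iff_left₀ hγ.le hr.le two_ne_zero).mp this
      · intro h
        have : γ^2 < r^2 := (pow_lt_pow_iff_left₀ hγ.le hr.le two_ne_zero).mpr h
        nlinarith [sin_sq_add_cos_sq θ]
    by_cases h : γ < r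
    · rw [Set.indicator_of_mem (hmem.mpr h), Set.indicator_of_mem (by simp [h])]
      rw [polarCoord_symm_apply]
      have e1 : ((r*cos θ/ℓ₁)^2 + (r*sin θ/ℓ₂)^2)^2
          = r^4 * (cos θ^2/ℓ₁^2 + sin θ^2/ℓ₂^2)^2 := by ring
      simp only [smul_eq_mul]
      rw [e1]
      have hD := (hDpos θ).ne'
      have hr0 : r ≠ 0 := (hγ.trans h).ne'
      have hC : (16*π^4*ℓ₁*ℓ₂ : ℝ) ≠ 0 := by positivity
      generalize hX : cos θ^2/ℓ₁^2 + sin θ^2/ℓ₂^2 = X at hD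
      generalize (16*π^4*ℓ₁*ℓ₂ : ℝ) = C at hC
      field_simp
    · rw [Set.indicator_of_notMem (fun hc => h (hmem.mp hc)),
        Set.indicator_of_notMem (by simp [h]), smul_zero]
  rw [setIntegral_congr_fun (by measurability) hcongr,
    setIntegral_indicator (measurableSet_Ioi.prod MeasurableSet.univ),
    Set.prod_inter_prod, Set.inter_univ, Set.Ioi_inter_Ioi,
    show (0 : ℝ) ⊔ γ = γ from sup_eq_right.mpr hγ.le]
  rw [Measure.volume_eq_prod]
  rw [show (∫ x in Set.Ioi γ ×ˢ Set.Ioo (-π) π,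
        (x.1 ^ 3)⁻¹ * ((16 * π ^ 4 * ℓ₁ * ℓ₂)⁻¹
          * ((cos x.2 ^ 2 / ℓ₁ ^ 2 + sin x.2 ^ 2 / ℓ₂ ^ 2) ^ 2)⁻¹) ∂(volume.prod volume))
      = (∫ a in Set.Ioi γ, ((a:ℝ)^3)⁻¹) * ∫ b in Set.Ioo (-π) π,
          (16 * π ^ 4 * ℓ₁ * ℓ₂)⁻¹ * ((cos b ^ 2 / ℓ₁ ^ 2 + sin b ^ 2 / ℓ₂ ^ 2) ^ 2)⁻¹
      from setIntegral_prod_mul (fun a : ℝ => ((a:ℝ)^3)⁻¹)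
        (fun b : ℝ => (16 * π ^ 4 * ℓ₁ * ℓ₂)⁻¹
          * ((cos b ^ 2 / ℓ₁ ^ 2 + sin b ^ 2 / ℓ₂ ^ 2) ^ 2)⁻¹) _ _]
  rw [radial γ hγ, MeasureTheory.integral_const_mul, angular ℓ₁ ℓ₂ h1 h2]
  field_simp
  ring
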